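/- arXiv:2101.07126 — 3 statements merged into one kernel-verified Lean document; each statement's English description precedes it below -/
import Mathlib

section
/- Let R ⊆ ℝ² be a convex set and let g : ℝ² → ℝ^p be a function that agrees with an affine map on R. Then for every w ≥ 1, A ∈ ℝ^(w×p) and b ∈ ℝ^w, there exist at most 1 + w(w+1)/2 convex sets whose union is R such that the map x ↦ σ(A·g(x) + b) agrees with an affine map ℝ² → ℝ^w on each of them. -/
open Real

/-- Componentwise ReLU. -/
noncomputable def relu {n : ℕ} (z : Fin n → ℝ) : Fin n → ℝ := fun j => max (z j) 0

abbrev E2 := Fin 2 → ℝ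

lemma affine_eval (f : E2 →ᵃ[ℝ] ℝ) (x : E2) : f x = f.linear x + f 0 := by
  have := f.map_vadd 0 x
  simpa using this

lemma lin_eval (L : E2 →ₗ[ℝ] ℝ) (x : E2) :
    L x = x 0 * L (Pi.single 0 1) + x 1 * L (Pi.single 1 1) := by
  have hx : x = x 0 • (Pi.single 0 1 : E2) + x 1 • (Pi.single 1 1 : E2) := by
    funext i
    fin_cases i <;> simp
  conv_lhs => rw [hx]
  simp [smul_eq_mul]

lemma ab_ne_zero {L : E2 →ₗ[ℝ] ℝ} (hL : L ≠ 0) :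
    L (Pi.single 0 1) ≠ 0 ∨ L (Pi.single 1 1) ≠ 0 := by
  by_contra h
  push_neg at h
  apply hL
  refine LinearMap.ext fun x => ?_
  rw [lin_eval, h.1, h.2]
  simp

/-- Parametrization of the line `{x | ℓ₀ x = 0}`. -/
lemma line_param (ℓ₀ : E2 →ᵃ[ℝ] ℝ) (hL : ℓ₀.linear ≠ 0) :
    ∃ (p₀ d : E2), ℓ₀ p₀ = 0 ∧ ℓ₀.linear d = 0 ∧ d ≠ 0 ∧
      ∀ x, ℓ₀ x = 0 → ∃ τ : ℝ, x = p₀ + τ • d := by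
  set L := ℓ₀.linear with hLdef
  set a := L (Pi.single 0 1) with ha
  set b := L (Pi.single 1 1) with hb
  set c := ℓ₀ 0 with hc
  have hab := ab_ne_zero hL
  rw [← ha, ← hb] at hab
  have hn : 0 < a^2 + b^2 := by
    rcases hab with h | h <;> positivity
  set n := a^2 + b^2 with hndef
  have hn' : n ≠ 0 := ne_of_gt hn
  refine ⟨![-c*a/n, -c*b/n], ![b, -a], ?_, ?_, ?_, ?_⟩
  · rw [affine_eval, lin_eval]
    simp only [← ha, ← hb, ← hc, Matrix.cons_val_zero, Matrix.cons_val_one, Matrix.head_cons, ← hLdef]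
    field_simp
    ring
  · rw [lin_eval]
    simp only [← ha, ← hb, Matrix.cons_val_zero, Matrix.cons_val_one, Matrix.head_cons, ← hLdef]
    ring
  · intro hd
    rcases hab with h | h
    · have := congrFun hd 1
      simp at this
      exact h (by linarith)
    · have := congrFun hd 0
      simp at this
      exact h this
  · intro x hx
    rw [affine_eval, lin_eval] at hx
    simp only [← ha, ← hb, ← hc, ← hLdef] at hx
    refine ⟨(x 0 * b - x 1 * a)/n, ?_⟩
    funext i
    fin_cases i <;>
      simp only [Pi.add_apply, Pi.smul_apply, smul_eq_mul, Matrix.cons_val_zero,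
        Matrix.cons_val_one, Matrix.head_cons, Fin.isValue, Fin.zero_eta, Fin.mk_one]
    · field_simp
      linear_combination (a) * hx
    · field_simp
      linear_combination (b) * hx

lemma eval_line (f : E2 →ᵃ[ℝ] ℝ) (p₀ d : E2) (τ : ℝ) :
    f (p₀ + τ • d) = f p₀ + τ * f.linear d := by
  have h := f.map_vadd p₀ (τ • d)
  simp only [vadd_eq_add, map_smul, smul_eq_mul] at h
  rw [show p₀ + τ • d = τ • d + p₀ from add_comm _ _, h]
  ring

lemma opp_signs_root {α β t₁ t₂ : ℝ} (h12 : t₁ < t₂)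
    (h : (α + t₁ * β) * (α + t₂ * β) < 0) : t₁ < -α/β ∧ -α/β < t₂ := by
  have hβ : β ≠ 0 := by
    rintro rfl
    nlinarith [sq_nonneg α]
  set r := -α/β with hr
  have hα : α = -r * β := by
    rw [hr]; field_simp
  have hprod : (t₁ - r) * (t₂ - r) < 0 := by
    rw [hα] at h
    have hβ2 : 0 < β^2 := by positivity
    nlinarith
  constructor
  · by_contra hc
    push_neg at hc
    nlinarith
  · by_contra hc
    push_neg at hc
    nlinarith

-- midpoint on the line with same strict signs
lemma mid_point {w : ℕ} (ℓ : Fin w → (E2 →ᵃ[ℝ] ℝ)) (J : Finset (Fin w)) (j₀ : Fin w)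
    (s : Fin w → Bool) (x₁ x₂ : E2)
    (h₁ : ∀ j ∈ J, if s j then 0 < ℓ j x₁ else ℓ j x₁ < 0)
    (h₂ : ∀ j ∈ J, if s j then 0 < ℓ j x₂ else ℓ j x₂ < 0)
    (hp : 0 < ℓ j₀ x₁) (hn : ℓ j₀ x₂ < 0) :
    ∃ x₀ : E2, (∀ j ∈ J, if s j then 0 < ℓ j x₀ else ℓ j x₀ < 0) ∧ ℓ j₀ x₀ = 0 := by
  set P := ℓ j₀ x₁ with hP
  set Nn := ℓ j₀ x₂ with hN
  set θ : ℝ := P / (P - Nn) with hθ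
  have hPN : 0 < P - Nn := by linarith
  have hθ0 : 0 < θ := by positivity
  have hθ1 : θ < 1 := by
    rw [hθ, div_lt_one hPN]; linarith
  refine ⟨AffineMap.lineMap x₁ x₂ θ, ?_, ?_⟩
  · intro j hj
    have he : ℓ j (AffineMap.lineMap x₁ x₂ θ) = θ * (ℓ j x₂ - ℓ j x₁) + ℓ j x₁ := by
      rw [AffineMap.apply_lineMap]
      simp [AffineMap.lineMap_apply_module]
      ring
    have hj₁ := h₁ j hj
    have hj₂ := h₂ j hj
    by_cases hsj : s j = true
    · rw [if_pos hsj] at hj₁ hj₂ ⊢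
      rw [he]
      nlinarith [mul_pos hθ0 hj₂, mul_pos (show (0:ℝ) < 1 - θ by linarith) hj₁]
    · rw [if_neg hsj] at hj₁ hj₂ ⊢
      rw [he]
      nlinarith [mul_neg_of_pos_of_neg hθ0 hj₂,
        mul_neg_of_pos_of_neg (show (0:ℝ) < 1 - θ by linarith) hj₁]
  · have he : ℓ j₀ (AffineMap.lineMap x₁ x₂ θ) = θ * (Nn - P) + P := by
      rw [AffineMap.apply_lineMap]
      simp [AffineMap.lineMap_apply_module]
      ring
    rw [he, hθ]
    field_simp
    ring

open Classical in
/-- The set of sign vectors realized on `J` that are "split" by the line of `j₀`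
has at most `J.card + 1` elements. -/
lemma split_bound {w : ℕ} (ℓ : Fin w → (E2 →ᵃ[ℝ] ℝ)) (J : Finset (Fin w)) (j₀ : Fin w)
    (hL : (ℓ j₀).linear ≠ 0)
    (p₀ d : E2) (hp₀ : ℓ j₀ p₀ = 0) (hd : (ℓ j₀).linear d = 0) (hdne : d ≠ 0)
    (hsurj : ∀ x, ℓ j₀ x = 0 → ∃ τ : ℝ, x = p₀ + τ • d) :
    {s : Fin w → Bool | (∀ j ∉ J, s j = false) ∧
      (∃ x, (∀ j ∈ J, if s j then 0 < ℓ j x else ℓ j x < 0) ∧ 0 < ℓ j₀ x) ∧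
      (∃ x, (∀ j ∈ J, if s j then 0 < ℓ j x else ℓ j x < 0) ∧ ℓ j₀ x < 0)}.ncard
      ≤ J.card + 1 := by
  set S := {s : Fin w → Bool | (∀ j ∉ J, s j = false) ∧
      (∃ x, (∀ j ∈ J, if s j then 0 < ℓ j x else ℓ j x < 0) ∧ 0 < ℓ j₀ x) ∧
      (∃ x, (∀ j ∈ J, if s j then 0 < ℓ j x else ℓ j x < 0) ∧ ℓ j₀ x < 0)} with hS
  -- for each s in S, choose a point on the line with strict signs
  have hmid : ∀ s ∈ S, ∃ τ : ℝ,
      (∀ j ∈ J, if s j then 0 < ℓ j (p₀ + τ • d) else ℓ j (p₀ + τ • d) < 0) := by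
    intro s hs
    obtain ⟨-, ⟨x₁, hx₁, hx₁p⟩, ⟨x₂, hx₂, hx₂n⟩⟩ := hs
    obtain ⟨x₀, hx₀, hx₀0⟩ := mid_point ℓ J j₀ s x₁ x₂ hx₁ hx₂ hx₁p hx₂n
    obtain ⟨τ, rfl⟩ := hsurj x₀ hx₀0
    exact ⟨τ, hx₀⟩
  choose! τ hτ using hmid
  -- roots of the functionals along the line
  set Z : Finset ℝ := J.image (fun j => -(ℓ j p₀) / ((ℓ j).linear d)) with hZ
  -- counting map
  set F : (Fin w → Bool) → ℕ := fun s => (Z.filter (fun z => z < τ s)).card with hF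
  have hmaps : ∀ s ∈ S, F s ∈ ((Finset.range (Z.card + 1) : Finset ℕ) : Set ℕ) := by
    intro s _
    simp only [Finset.coe_range, Set.mem_Iio, Finset.mem_coe]
    exact Nat.lt_succ_of_le (Finset.card_filter_le _ _)
  -- injectivity
  have hkey : ∀ s ∈ S, ∀ s' ∈ S, τ s < τ s' → F s = F s' → s = s' := by
    intro s hs s' hs' hlt hFe
    by_contra hne
    have : ∃ j, s j ≠ s' j := by
      by_contra hc
      push_neg at hc
      exact hne (funext hc)
    obtain ⟨j, hjne⟩ := this
    have hjJ : j ∈ J := by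
      by_contra hjn
      exact hjne ((hs.1 j hjn).trans (hs'.1 j hjn).symm)
    have h1 := hτ s hs j hjJ
    have h2 := hτ s' hs' j hjJ
    rw [eval_line] at h1 h2
    set α := ℓ j p₀
    set β := (ℓ j).linear d
    have hprod : (α + τ s * β) * (α + τ s' * β) < 0 := by
      by_cases hsj : s j = true
      · rw [if_pos hsj] at h1
        have hs'j : s' j = false := by
          cases hb : s' j
          · rfl
          · exact absurd (hsj.trans hb.symm) hjne
        rw [if_neg (by simp [hs'j])] at h2
        exact mul_neg_of_pos_of_neg h1 h2
      · rw [if_neg hsj] at h1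
        have hs'j : s' j = true := by
          cases hb : s' j
          · exact absurd ((Bool.eq_false_iff.mpr hsj).trans hb.symm) hjne
          · rfl
        rw [if_pos hs'j] at h2
        exact mul_neg_of_neg_of_pos h1 h2
    obtain ⟨hr1, hr2⟩ := opp_signs_root hlt hprod
    have hrZ : -α / β ∈ Z := Finset.mem_image_of_mem _ hjJ
    have hsub : Z.filter (fun z => z < τ s) ⊆ Z.filter (fun z => z < τ s') := by
      intro z hz
      rw [Finset.mem_filter] at hz ⊢
      exact ⟨hz.1, hz.2.trans hlt⟩
    have hmem : -α / β ∈ Z.filter (fun z => z < τ s') := by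
      rw [Finset.mem_filter]; exact ⟨hrZ, hr2⟩
    have hnmem : -α / β ∉ Z.filter (fun z => z < τ s) := by
      rw [Finset.mem_filter]
      rintro ⟨-, hlt'⟩
      exact absurd hlt' (not_lt.mpr hr1.le)
    have : (Z.filter (fun z => z < τ s)).card < (Z.filter (fun z => z < τ s')).card :=
      Finset.card_lt_card (Finset.ssubset_iff_of_subset hsub |>.mpr ⟨_, hmem, hnmem⟩)
    simp only [hF] at hFe
    omega
  have hinj : Set.InjOn F S := by
    intro s hs s' hs' hFe
    rcases lt_trichotomy (τ s) (τ s') with h | h | h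
    · exact hkey s hs s' hs' h hFe
    · -- equal parameters: same point, same signs
      funext j
      by_cases hjJ : j ∈ J
      · have h1 := hτ s hs j hjJ
        have h2 := hτ s' hs' j hjJ
        rw [h] at h1
        by_cases hsj : s j = true
        · rw [if_pos hsj] at h1
          cases hb : s' j
          · rw [if_neg (by simp [hb])] at h2
            linarith
          · simp [hsj, hb]
        · rw [if_neg hsj] at h1
          cases hb : s' j
          · simp [Bool.not_eq_true] at hsj
            simp [hsj, hb]
          · rw [if_pos hb] at h2
            linarith
      · rw [hs.1 j hjJ, hs'.1 j hjJ]
    · exact (hkey s' hs' s hs h hFe.symm).symm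
  calc S.ncard ≤ ((Finset.range (Z.card + 1) : Finset ℕ) : Set ℕ).ncard :=
        Set.ncard_le_ncard_of_injOn F hmaps hinj (Set.toFinite _)
    _ = Z.card + 1 := by rw [Set.ncard_coe_finset, Finset.card_range]
    _ ≤ J.card + 1 := by
        have hZc : Z.card ≤ J.card := Finset.card_image_le
        omega

def Realized {w : ℕ} (ℓ : Fin w → (E2 →ᵃ[ℝ] ℝ)) (J : Finset (Fin w)) (s : Fin w → Bool) : Prop :=
  (∀ j ∉ J, s j = false) ∧ ∃ x, ∀ j ∈ J, if s j then 0 < ℓ j x else ℓ j x < 0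

lemma card_realized {w : ℕ} (ℓ : Fin w → (E2 →ᵃ[ℝ] ℝ)) (J : Finset (Fin w)) :
    {s | Realized ℓ J s}.ncard ≤ 1 + J.card * (J.card + 1) / 2 := by
  induction J using Finset.induction_on with
  | empty =>
    have hsub : {s | Realized ℓ ∅ s} ⊆ {fun _ => false} := by
      intro s hs
      have := hs.1
      simp only [Set.mem_singleton_iff]
      funext j
      exact this j (Finset.notMem_empty j)
    calc {s | Realized ℓ ∅ s}.ncard ≤ ({fun _ => false} : Set (Fin w → Bool)).ncard :=
          Set.ncard_le_ncard hsub (Set.toFinite _)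
      _ = 1 := Set.ncard_singleton _
      _ ≤ _ := by simp
  | @insert j₀ J hj₀ ih =>
    set Sp := {s : Fin w → Bool | (∀ j ∉ J, s j = false) ∧
        ∃ x, (∀ j ∈ J, if s j then 0 < ℓ j x else ℓ j x < 0) ∧ 0 < ℓ j₀ x} with hSp
    set Sm := {s : Fin w → Bool | (∀ j ∉ J, s j = false) ∧
        ∃ x, (∀ j ∈ J, if s j then 0 < ℓ j x else ℓ j x < 0) ∧ ℓ j₀ x < 0} with hSm
    set S' := {s | Realized ℓ (insert j₀ J) s} with hS'
    set A := {s ∈ S' | s j₀ = false} with hA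
    set B := {s ∈ S' | s j₀ = true} with hB
    -- A ⊆ Sm
    have hASm : A ⊆ Sm := by
      rintro s ⟨⟨hoff, x, hx⟩, hsj₀⟩
      refine ⟨?_, x, ?_, ?_⟩
      · intro j hj
        by_cases hjj : j = j₀
        · rw [hjj]; exact hsj₀
        · exact hoff j (by simp [hjj, hj])
      · intro j hj
        exact hx j (Finset.mem_insert_of_mem hj)
      · have := hx j₀ (Finset.mem_insert_self j₀ J)
        rwa [if_neg (by simp [hsj₀])] at this
    -- update '' B ⊆ Sp
    have hBSp : ∀ s ∈ B, Function.update s j₀ false ∈ Sp := by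
      rintro s ⟨⟨hoff, x, hx⟩, hsj₀⟩
      refine ⟨?_, x, ?_, ?_⟩
      · intro j hj
        by_cases hjj : j = j₀
        · rw [hjj]; simp [Function.update]
        · rw [Function.update_of_ne hjj]
          exact hoff j (by simp [hjj, hj])
      · intro j hj
        have hjj : j ≠ j₀ := by rintro rfl; exact hj₀ hj
        rw [Function.update_of_ne hjj]
        exact hx j (Finset.mem_insert_of_mem hj)
      · have := hx j₀ (Finset.mem_insert_self j₀ J)
        rwa [if_pos hsj₀] at this
    have hBinj : Set.InjOn (fun s => Function.update s j₀ false) B := by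
      rintro s ⟨-, hs⟩ s' ⟨-, hs'⟩ he
      funext j
      by_cases hjj : j = j₀
      · rw [hjj, hs, hs']
      · have := congrFun he j
        simpa [Function.update_of_ne hjj] using this
    -- split the count
    have hdisj : Disjoint A B := by
      rw [Set.disjoint_iff]
      rintro s ⟨⟨-, h1⟩, ⟨-, h2⟩⟩
      rw [h1] at h2
      exact absurd h2 (by simp)
    have hunion : S' = A ∪ B := by
      ext s
      simp only [hA, hB, Set.mem_union, Set.mem_setOf_eq]
      constructor
      · intro hs
        cases hb : s j₀
        · exact Or.inl ⟨hs, rfl⟩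
        · exact Or.inr ⟨hs, rfl⟩
      · rintro (⟨hs, -⟩ | ⟨hs, -⟩) <;> exact hs
    have hcard1 : S'.ncard = A.ncard + B.ncard := by
      rw [hunion]
      exact Set.ncard_union_eq hdisj (Set.toFinite _) (Set.toFinite _)
    have hcardA : A.ncard ≤ Sm.ncard := Set.ncard_le_ncard hASm (Set.toFinite _)
    have hcardB : B.ncard ≤ Sp.ncard := by
      have := Set.ncard_image_of_injOn hBinj
      rw [← this]
      exact Set.ncard_le_ncard (by rintro t ⟨s, hs, rfl⟩; exact hBSp s hs) (Set.toFinite _)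
    have hie : (Sm ∪ Sp).ncard + (Sm ∩ Sp).ncard = Sm.ncard + Sp.ncard :=
      Set.ncard_union_add_ncard_inter _ _
    have hsubR : Sm ∪ Sp ⊆ {s | Realized ℓ J s} := by
      rintro s (⟨hoff, x, hx, -⟩ | ⟨hoff, x, hx, -⟩) <;> exact ⟨hoff, x, hx⟩
    have hcardU : (Sm ∪ Sp).ncard ≤ 1 + J.card * (J.card + 1) / 2 :=
      le_trans (Set.ncard_le_ncard hsubR (Set.toFinite _)) ih
    -- the intersection is the split set
    have hcardI : (Sm ∩ Sp).ncard ≤ J.card + 1 := by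
      by_cases hdeg : (ℓ j₀).linear = 0
      · have : Sm ∩ Sp = ∅ := by
          rw [Set.eq_empty_iff_forall_notMem]
          rintro s ⟨⟨-, x₂, -, hx₂⟩, ⟨-, x₁, -, hx₁⟩⟩
          have e1 : ℓ j₀ x₁ = ℓ j₀ 0 := by rw [affine_eval, hdeg]; simp
          have e2 : ℓ j₀ x₂ = ℓ j₀ 0 := by rw [affine_eval, hdeg]; simp
          rw [e1] at hx₁; rw [e2] at hx₂
          linarith
        rw [this]
        simp
      · obtain ⟨p₀, dd, hp₀, hd, hdne, hsurj⟩ := line_param (ℓ j₀) hdeg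
        have heq : Sm ∩ Sp = {s : Fin w → Bool | (∀ j ∉ J, s j = false) ∧
            (∃ x, (∀ j ∈ J, if s j then 0 < ℓ j x else ℓ j x < 0) ∧ 0 < ℓ j₀ x) ∧
            (∃ x, (∀ j ∈ J, if s j then 0 < ℓ j x else ℓ j x < 0) ∧ ℓ j₀ x < 0)} := by
          ext s
          constructor
          · rintro ⟨⟨hoff, hm⟩, ⟨-, hp⟩⟩
            exact ⟨hoff, hp, hm⟩
          · rintro ⟨hoff, hp, hm⟩
            exact ⟨⟨hoff, hm⟩, ⟨hoff, hp⟩⟩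
        rw [heq]
        exact split_bound ℓ J j₀ hdeg p₀ dd hp₀ hd hdne hsurj
    -- arithmetic
    have hcards : (insert j₀ J).card = J.card + 1 := Finset.card_insert_of_notMem hj₀
    obtain ⟨m, hm⟩ := Nat.even_mul_succ_self J.card
    have h2 : (J.card+1)*(J.card+1+1) = J.card*(J.card+1) + 2*(J.card+1) := by ring
    rw [hcards]
    omega

open Classical in
/-- Effective sign of coordinate `j` for sign vector `s`: for degenerate (constant)
coordinates it is the sign of the constant. -/
noncomputable def esign {w : ℕ} (ℓ : Fin w → (E2 →ᵃ[ℝ] ℝ)) (s : Fin w → Bool) (j : Fin w) : Bool :=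
  if (ℓ j).linear = 0 then decide (0 ≤ ℓ j 0) else s j

open Classical in
/-- Every point of the plane lies in the closed cell of some realized sign vector. -/
lemma cover_exists {w : ℕ} (ℓ : Fin w → (E2 →ᵃ[ℝ] ℝ)) (x : E2) :
    ∃ s : Fin w → Bool,
      Realized ℓ (Finset.univ.filter fun j => (ℓ j).linear ≠ 0) s ∧
      ∀ j : Fin w, (esign ℓ s j = true → 0 ≤ ℓ j x) ∧ (esign ℓ s j = false → ℓ j x ≤ 0) := by
  classical
  set J : Finset (Fin w) := Finset.univ.filter fun j => (ℓ j).linear ≠ 0 with hJ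
  have hmemJ : ∀ j, j ∈ J ↔ (ℓ j).linear ≠ 0 := by
    intro j; simp [hJ]
  -- choose a direction v not parallel to any of the lines
  obtain ⟨t0, ht0⟩ := Infinite.exists_notMem_finset
    (J.image (fun j => -((ℓ j).linear (Pi.single 0 1))/((ℓ j).linear (Pi.single 1 1))))
  set v : E2 := ![1, t0] with hv
  have hvval : ∀ j, (ℓ j).linear v
      = (ℓ j).linear (Pi.single 0 1) + t0 * (ℓ j).linear (Pi.single 1 1) := by
    intro j
    rw [lin_eval]
    simp [hv]
  have hvne : ∀ j ∈ J, (ℓ j).linear v ≠ 0 := by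
    intro j hj hz
    rw [hvval] at hz
    have hab := ab_ne_zero ((hmemJ j).1 hj)
    by_cases hb : (ℓ j).linear (Pi.single 1 1) = 0
    · rw [hb, mul_zero, add_zero] at hz
      rcases hab with h | h
      · exact h hz
      · exact h hb
    · apply ht0
      have he : t0 = -((ℓ j).linear (Pi.single 0 1))/((ℓ j).linear (Pi.single 1 1)) := by
        field_simp
        linarith
      rw [he]
      exact Finset.mem_image_of_mem _ hj
  -- the scale of admissible perturbation
  set δ : Fin w → ℝ := fun j => if ℓ j x = 0 then 1 else |ℓ j x| / |(ℓ j).linear v| with hδ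
  have hδpos : ∀ j ∈ J, 0 < δ j := by
    intro j hj
    by_cases h : ℓ j x = 0
    · simp only [hδ, if_pos h]
      norm_num
    · simp only [hδ, if_neg h]
      have h1 : 0 < |ℓ j x| := abs_pos.mpr h
      have h2 : 0 < |(ℓ j).linear v| := abs_pos.mpr (hvne j hj)
      positivity
  set M : Finset ℝ := insert 1 (J.image δ) with hM
  have hMne : M.Nonempty := ⟨1, Finset.mem_insert_self _ _⟩
  set ε : ℝ := M.min' hMne with hε
  have hεpos : 0 < ε := by
    rw [hε, Finset.lt_min'_iff]
    intro y hy
    rw [hM, Finset.mem_insert] at hy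
    rcases hy with rfl | hy
    · norm_num
    · obtain ⟨j, hj, rfl⟩ := Finset.mem_image.mp hy
      exact hδpos j hj
  have hεle : ∀ j ∈ J, ε ≤ δ j := by
    intro j hj
    exact Finset.min'_le _ _ (Finset.mem_insert_of_mem (Finset.mem_image_of_mem δ hj))
  set y : E2 := x + (ε/2) • v with hy
  have hyval : ∀ j, ℓ j y = ℓ j x + (ε/2) * (ℓ j).linear v := fun j => eval_line (ℓ j) x v (ε/2)
  -- sign stability claims for j ∈ J
  have hclaims : ∀ j ∈ J, (0 < ℓ j x → 0 < ℓ j y) ∧ (ℓ j x < 0 → ℓ j y < 0) ∧ ℓ j y ≠ 0 := by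
    intro j hj
    have hLv := hvne j hj
    have hd2 : 0 < ε/2 := by linarith
    by_cases hx0 : ℓ j x = 0
    · refine ⟨fun h => absurd h (by rw [hx0]; exact lt_irrefl 0),
        fun h => absurd h (by rw [hx0]; exact lt_irrefl 0), ?_⟩
      rw [hyval, hx0, zero_add]
      exact mul_ne_zero (ne_of_gt hd2) hLv
    · have habs : (ε/2) * |(ℓ j).linear v| < |ℓ j x| := by
        have h1 : δ j = |ℓ j x| / |(ℓ j).linear v| := by simp only [hδ, if_neg hx0]
        have h2 : 0 < |(ℓ j).linear v| := abs_pos.mpr hLv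
        have h3 : ε/2 < δ j := by
          have := hεle j hj
          linarith
        rw [h1] at h3
        calc (ε/2) * |(ℓ j).linear v| < (|ℓ j x| / |(ℓ j).linear v|) * |(ℓ j).linear v| := by
              exact mul_lt_mul_of_pos_right h3 h2
          _ = |ℓ j x| := by field_simp
      have hb1 := le_abs_self ((ℓ j).linear v)
      have hb2 := neg_abs_le ((ℓ j).linear v)
      have habs' : |(ℓ j).linear v| ≥ 0 := abs_nonneg _
      refine ⟨?_, ?_, ?_⟩
      · intro hpos
        rw [abs_of_pos hpos] at habs
        rw [hyval]
        nlinarith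
      · intro hneg
        rw [abs_of_neg hneg] at habs
        rw [hyval]
        nlinarith
      · rcases lt_or_gt_of_ne hx0 with h | h
        · have : ℓ j y < 0 := by
            rw [abs_of_neg h] at habs
            rw [hyval]
            nlinarith
          exact ne_of_lt this
        · have : 0 < ℓ j y := by
            rw [abs_of_pos h] at habs
            rw [hyval]
            nlinarith
          exact ne_of_gt this
  refine ⟨fun j => if j ∈ J then decide (0 < ℓ j y) else false, ⟨?_, y, ?_⟩, ?_⟩
  · intro j hj
    simp only [if_neg hj]
  · intro j hj
    simp only [if_pos hj]
    by_cases h : 0 < ℓ j y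
    · rw [if_pos (by simpa using h)]
      exact h
    · rw [if_neg (by simpa using h)]
      rcases lt_or_gt_of_ne ((hclaims j hj).2.2) with h' | h'
      · exact h'
      · exact absurd h' h
  · intro j
    by_cases hdeg : (ℓ j).linear = 0
    · have hconst : ℓ j x = ℓ j 0 := by
        rw [affine_eval, hdeg]
        simp
      constructor
      · intro hes
        rw [esign, if_pos hdeg] at hes
        rw [hconst]
        exact of_decide_eq_true hes
      · intro hes
        rw [esign, if_pos hdeg] at hes
        rw [hconst]
        have := of_decide_eq_false hes
        linarith [lt_of_not_ge this]
    · have hjJ : j ∈ J := (hmemJ j).2 hdeg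
      have hes : esign ℓ (fun j => if j ∈ J then decide (0 < ℓ j y) else false) j
          = decide (0 < ℓ j y) := by
        rw [esign, if_neg hdeg]
        simp only [if_pos hjJ]
      rw [hes]
      constructor
      · intro hdec
        have hypos : 0 < ℓ j y := of_decide_eq_true hdec
        by_contra hc
        push_neg at hc
        have := (hclaims j hjJ).2.1 hc
        linarith
      · intro hdec
        have hyneg : ¬ (0 < ℓ j y) := of_decide_eq_false hdec
        by_contra hc
        push_neg at hc
        have := (hclaims j hjJ).1 hc
        linarith

noncomputable def rowAff {p w : ℕ} (A : Matrix (Fin w) (Fin p) ℝ) (b : Fin w → ℝ)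
    (g0 : E2 →ᵃ[ℝ] (Fin p → ℝ)) (j : Fin w) : E2 →ᵃ[ℝ] ℝ where
  toFun := fun x => A.mulVec (g0 x) j + b j
  linear := (LinearMap.proj j) ∘ₗ (Matrix.mulVecLin A) ∘ₗ g0.linear
  map_vadd' := by
    intro q v
    have hgv : g0 (v + q) = g0.linear v + g0 q := by
      have := g0.map_vadd q v
      simpa using this
    simp [hgv, Matrix.mulVec_add, Matrix.mulVecLin_apply]
    ring


/-- A ReLU layer applied on top of a function which is affine on a convex region `R`
splits `R` into at most `1 + w(w+1)/2` convex pieces on which the result is affine. -/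
theorem relu_layer_refines_region (p w : ℕ) (hw : 1 ≤ w)
    (R : Set (Fin 2 → ℝ)) (hR : Convex ℝ R)
    (g : (Fin 2 → ℝ) → (Fin p → ℝ)) (g0 : (Fin 2 → ℝ) →ᵃ[ℝ] (Fin p → ℝ))
    (hg : ∀ x ∈ R, g x = g0 x)
    (A : Matrix (Fin w) (Fin p) ℝ) (b : Fin w → ℝ) :
    ∃ (N : ℕ), N ≤ 1 + w * (w + 1) / 2 ∧
      ∃ (C : Fin N → Set (Fin 2 → ℝ)) (h : Fin N → ((Fin 2 → ℝ) →ᵃ[ℝ] (Fin w → ℝ))),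
        (∀ i, Convex ℝ (C i)) ∧ (⋃ i, C i) = R ∧
        ∀ i, ∀ x ∈ C i, relu (A.mulVec (g x) + b) = h i x := by
  classical
  set ℓ : Fin w → (E2 →ᵃ[ℝ] ℝ) := rowAff A b g0 with hℓ
  have hεval : ∀ (j : Fin w) (x : E2), ℓ j x = A.mulVec (g0 x) j + b j := fun _ _ => rfl
  set J : Finset (Fin w) := Finset.univ.filter fun j => (ℓ j).linear ≠ 0 with hJ
  set T : Finset (Fin w → Bool) := Finset.univ.filter (fun s => Realized ℓ J s) with hT
  have hcardT : T.card ≤ 1 + w * (w + 1) / 2 := by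
    have h1 : {s | Realized ℓ J s}.ncard = T.card := by
      rw [← Set.ncard_coe_finset T]
      congr 1
      ext s
      simp [hT]
    have h2 := card_realized ℓ J
    have h3 : J.card ≤ w := by
      calc J.card ≤ Finset.univ.card := Finset.card_filter_le _ _
        _ = w := by simp
    have h4 : J.card * (J.card + 1) ≤ w * (w + 1) := Nat.mul_le_mul h3 (by omega)
    have h5 := Nat.div_le_div_right (c := 2) h4
    omega
  set Piece : (Fin w → Bool) → Set E2 := fun s =>
    R ∩ ⋂ j, {x | if esign ℓ s j = true then 0 ≤ ℓ j x else ℓ j x ≤ 0} with hPiece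
  refine ⟨T.card, hcardT, fun i => Piece (T.equivFin.symm i).1,
    fun i => AffineMap.pi (fun j => if esign ℓ ((T.equivFin.symm i).1) j = true then ℓ j else 0),
    ?_, ?_, ?_⟩
  · -- convexity
    intro i
    apply hR.inter
    apply convex_iInter
    intro j
    by_cases h : esign ℓ ((T.equivFin.symm i).1) j = true
    · simp only [if_pos h]
      have := (convex_Ici (0:ℝ)).affine_preimage (ℓ j)
      exact this
    · simp only [if_neg h]
      have := (convex_Iic (0:ℝ)).affine_preimage (ℓ j)
      exact this
  · -- union equals R
    apply Set.Subset.antisymm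
    · exact Set.iUnion_subset fun i => Set.inter_subset_left
    · intro x hx
      obtain ⟨s, hsR, hsx⟩ := cover_exists ℓ x
      have hsT : s ∈ T := by
        rw [hT, Finset.mem_filter]
        exact ⟨Finset.mem_univ s, hsR⟩
      refine Set.mem_iUnion.mpr ⟨T.equivFin ⟨s, hsT⟩, ?_⟩
      have he : (T.equivFin.symm (T.equivFin ⟨s, hsT⟩)).1 = s := by
        rw [Equiv.symm_apply_apply]
      rw [he]
      refine ⟨hx, Set.mem_iInter.mpr fun j => ?_⟩
      by_cases h : esign ℓ s j = true
      · simp only [Set.mem_setOf_eq, if_pos h]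
        exact (hsx j).1 h
      · simp only [Set.mem_setOf_eq, if_neg h]
        exact (hsx j).2 (by simpa using h)
  · -- affine agreement
    intro i x hx
    obtain ⟨hxR, hxcell⟩ := hx
    funext j
    have hgx : g x = g0 x := hg x hxR
    have hlhs : relu (A.mulVec (g x) + b) j = max (ℓ j x) 0 := by
      rw [relu, hgx]
      rfl
    have hcell := Set.mem_iInter.mp hxcell j
    by_cases h : esign ℓ ((T.equivFin.symm i).1) j = true
    · simp only [Set.mem_setOf_eq, if_pos h] at hcell
      rw [hlhs]
      have hrhs : AffineMap.pi
          (fun j => if esign ℓ ((T.equivFin.symm i).1) j = true then ℓ j else 0) x j = ℓ j x := by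
        simp only [AffineMap.pi_apply, if_pos h]
      rw [hrhs]
      exact max_eq_left hcell
    · simp only [Set.mem_setOf_eq, if_neg h] at hcell
      rw [hlhs]
      have hrhs : AffineMap.pi
          (fun j => if esign ℓ ((T.equivFin.symm i).1) j = true then ℓ j else 0) x j = 0 := by
        simp only [AffineMap.pi_apply, if_neg h]
        rfl
      rw [hrhs]
      exact max_eq_right hcell
end

section
/- Let m ≥ 1 and let ε > 0 satisfy (1+ε)·cos(π/2^m) < cos(π/2^(m+1)). Then for any two distinct points p, q ∈ V_ε, the midpoint (p+q)/2 lies in the interior of P_m. -/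
open Real

/-- Outward unit normal of the `k`-th edge of the regular polygon `P m`. -/
noncomputable def polyNormal (m k : ℕ) : Fin 2 → ℝ :=
  ![Real.cos (π / 2 + (2 * (k : ℝ) + 1) * π / (2 : ℝ) ^ (m + 1)),
    Real.sin (π / 2 + (2 * (k : ℝ) + 1) * π / (2 : ℝ) ^ (m + 1))]

/-- The regular polygon `P m` with `2^(m+1)` vertices inscribed in the unit circle
with a vertex at `(0,1)`. -/
noncomputable def P (m : ℕ) : Set (Fin 2 → ℝ) :=
  {x | ∀ k < 2 ^ (m + 1),
    x 0 * polyNormal m k 0 + x 1 * polyNormal m k 1 ≤ Real.cos (π / (2 : ℝ) ^ (m + 1))}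

/-- The `j`-th "even" vertex of `P m` (every second vertex as `j` ranges over `j < 2^m`). -/
noncomputable def vertex (m j : ℕ) : Fin 2 → ℝ :=
  ![Real.cos (π / 2 + 2 * π * (j : ℝ) / (2 : ℝ) ^ m),
    Real.sin (π / 2 + 2 * π * (j : ℝ) / (2 : ℝ) ^ m)]

/-- Every second vertex of `P m`, pushed radially outward by the factor `1 + ε`. -/
noncomputable def Vset (m : ℕ) (ε : ℝ) : Set (Fin 2 → ℝ) :=
  {p | ∃ j < 2 ^ m, p = (1 + ε) • vertex m j}

/-- Balanced reduction mod `2M`. -/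
lemma exists_reduce (M t : ℤ) (hM : 0 < M) : ∃ t' q : ℤ, t = t' + 2 * M * q ∧ -M ≤ t' ∧ t' ≤ M := by
  refine ⟨t - 2 * M * ((t + M) / (2 * M)), (t + M) / (2 * M), by ring, ?_, ?_⟩ <;>
  · have h1 := Int.mul_ediv_add_emod (t + M) (2 * M)
    have h2 := Int.emod_nonneg (t + M) (by positivity : (2 * M : ℤ) ≠ 0)
    have h3 := Int.emod_lt_of_pos (t + M) (by positivity : (0:ℤ) < 2 * M)
    omega

lemma two_mul_M_theta (m : ℕ) : (2 * ((2:ℝ)^(m+1)) ) * (π / (2:ℝ)^(m+1)) = 2 * π := by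
  have : (2:ℝ)^(m+1) ≠ 0 := by positivity
  field_simp

lemma cos_reduced (m : ℕ) (t t' q : ℤ) (h : t = t' + 2 * (2:ℤ)^(m+1) * q) :
    Real.cos ((t:ℝ) * (π / (2:ℝ)^(m+1))) = Real.cos ((t':ℝ) * (π / (2:ℝ)^(m+1))) := by
  have hMθ := two_mul_M_theta m
  have hc : (t:ℝ) * (π / (2:ℝ)^(m+1)) =
      (t':ℝ) * (π / (2:ℝ)^(m+1)) + (q:ℝ) * (2 * π) := by
    have ht : (t:ℝ) = (t':ℝ) + 2 * (2:ℝ)^(m+1) * (q:ℝ) := by exact_mod_cast congrArg (fun z : ℤ => (z:ℝ)) h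
    rw [ht]
    linear_combination (q:ℝ) * hMθ
  rw [hc, Real.cos_add_int_mul_two_pi]

lemma cos_mul_le (m : ℕ) (t' n : ℤ) (hn : 0 < n) (hlow : n ≤ |t'|) (hhigh : |t'| ≤ 2^(m+1)) :
    Real.cos ((t':ℝ) * (π / (2:ℝ)^(m+1))) ≤ Real.cos ((n:ℝ) * (π / (2:ℝ)^(m+1))) := by
  set θ : ℝ := π / (2:ℝ)^(m+1) with hθ
  have hθpos : 0 < θ := by positivity
  have h1 : Real.cos ((t':ℝ) * θ) = Real.cos ((|t'| : ℤ) * θ) := by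
    rcases abs_choice t' with h | h <;> rw [h]
    push_cast; rw [neg_mul, Real.cos_neg]
  rw [h1]
  apply Real.cos_le_cos_of_nonneg_of_le_pi
  · positivity
  · have : ((|t'| : ℤ) : ℝ) ≤ (2:ℝ)^(m+1) := by exact_mod_cast hhigh
    calc ((|t'| : ℤ) : ℝ) * θ ≤ (2:ℝ)^(m+1) * θ := by
          apply mul_le_mul_of_nonneg_right this hθpos.le
      _ = π := by rw [hθ]; field_simp
  · have : (n : ℝ) ≤ ((|t'| : ℤ) : ℝ) := by exact_mod_cast hlow
    exact mul_le_mul_of_nonneg_right this hθpos.le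

/-- For odd `t`, `cos (t θ) ≤ cos θ`. -/
lemma cos_odd_le (m : ℕ) (t : ℤ) (ht : Odd t) :
    Real.cos ((t:ℝ) * (π / (2:ℝ)^(m+1))) ≤ Real.cos (π / (2:ℝ)^(m+1)) := by
  obtain ⟨t', q, h, hl, hh⟩ := exists_reduce ((2:ℤ)^(m+1)) t (by positivity)
  rw [cos_reduced m t t' q h]
  have ht'0 : t' ≠ 0 := by
    rintro rfl
    rw [zero_add] at h
    exact (Int.not_odd_iff_even.mpr ⟨(2:ℤ)^(m+1) * q, by rw [h]; ring⟩) ht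
  have := cos_mul_le m t' 1 one_pos (Int.one_le_abs ht'0) (abs_le.mpr ⟨hl, hh⟩)
  simpa using this

/-- For odd `t` not congruent to `±1` mod `2^(m+2)`, `cos (t θ) ≤ cos (3 θ)`. -/
lemma cos_odd_le3 (m : ℕ) (t : ℤ) (ht : Odd t)
    (h1 : ¬ ((2:ℤ)^(m+2) ∣ t - 1)) (h2 : ¬ ((2:ℤ)^(m+2) ∣ t + 1)) :
    Real.cos ((t:ℝ) * (π / (2:ℝ)^(m+1))) ≤ Real.cos (3 * (π / (2:ℝ)^(m+1))) := by
  obtain ⟨t', q, h, hl, hh⟩ := exists_reduce ((2:ℤ)^(m+1)) t (by positivity)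
  have hN : (2:ℤ)^(m+2) = 2 * 2^(m+1) := by ring
  rw [cos_reduced m t t' q h]
  have hodd : Odd t' := by
    obtain ⟨c, hc⟩ := ht
    exact ⟨c - 2^(m+1) * q, by linear_combination hc - h⟩
  have h3 : 3 ≤ |t'| := by
    obtain ⟨c, hc⟩ := hodd
    rcases (by omega : t' = 1 ∨ t' = -1 ∨ 3 ≤ t' ∨ t' ≤ -3) with rfl | rfl | h' | h'
    · exact absurd ⟨q, by rw [hN]; linarith⟩ h1
    · exact absurd ⟨q, by rw [hN]; linarith⟩ h2
    · exact le_abs.mpr (Or.inl h')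
    · exact le_abs.mpr (Or.inr (by omega))
  have := cos_mul_le m t' 3 (by norm_num) h3 (abs_le.mpr ⟨hl, hh⟩)
  simpa using this

/-- Not both offsets can be `±1` mod `2^(m+2)` for distinct vertices. -/
lemma not_both (m i j k : ℕ) (hi : i < 2^m) (hj : j < 2^m) (hij : i ≠ j)
    (h1 : (2:ℤ)^(m+2) ∣ (4*i - 2*k - 1) - 1 ∨ (2:ℤ)^(m+2) ∣ (4*i - 2*k - 1) + 1)
    (h2 : (2:ℤ)^(m+2) ∣ (4*j - 2*k - 1) - 1 ∨ (2:ℤ)^(m+2) ∣ (4*j - 2*k - 1) + 1) : False := by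
  have hiz : (i:ℤ) < 2^m := by exact_mod_cast hi
  have hjz : (j:ℤ) < 2^m := by exact_mod_cast hj
  have hijz : (i:ℤ) ≠ j := by exact_mod_cast fun h => hij (Nat.cast_injective h)
  have hiz0 : (0:ℤ) ≤ i := Int.ofNat_nonneg i
  have hjz0 : (0:ℤ) ≤ j := Int.ofNat_nonneg j
  have hs : (0:ℤ) < 2^m := by positivity
  -- extract witnesses
  rcases h1 with ⟨a, ha⟩ | ⟨a, ha⟩ <;> rcases h2 with ⟨b, hb⟩ | ⟨b, hb⟩ <;>
  [skip; (exact absurd (show (4:ℤ) * ((i:ℤ) - j) - 2 = 4 * (2^m * (a - b)) by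
      have : (2:ℤ)^(m+2) = 4 * 2^m := by ring
      rw [this] at ha hb; linarith [ha, hb]) (by
      generalize (2:ℤ)^m * (a - b) = u at *; omega));
   (exact absurd (show (4:ℤ) * ((i:ℤ) - j) + 2 = 4 * (2^m * (a - b)) by
      have : (2:ℤ)^(m+2) = 4 * 2^m := by ring
      rw [this] at ha hb; linarith [ha, hb]) (by
      generalize (2:ℤ)^m * (a - b) = u at *; omega)); skip] <;>
  · have key : (4:ℤ) * ((i:ℤ) - j) = 4 * (2^m * (a - b)) := by
      have : (2:ℤ)^(m+2) = 4 * 2^m := by ring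
      rw [this] at ha hb; linarith [ha, hb]
    have key2 : (i:ℤ) - j = 2^m * (a - b) := by linarith
    rcases lt_trichotomy (a - b) 0 with h' | h' | h'
    · have : (2:ℤ)^m * (a - b) ≤ 2^m * (-1) := by
        apply mul_le_mul_of_nonneg_left (by omega) hs.le
      omega
    · rw [h'] at key2; omega
    · have : (2:ℤ)^m * 1 ≤ 2^m * (a - b) := by
        apply mul_le_mul_of_nonneg_left (by omega) hs.le
      omega

/-- If `(1+ε)·cos(π/2^m) < cos(π/2^(m+1))`, the midpoint of any two distinct points
of `V_ε` lies in the interior of `P m`. -/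
theorem midpoint_in_interior (m : ℕ) (hm : 1 ≤ m) (ε : ℝ) (hε : 0 < ε)
    (hε2 : (1 + ε) * Real.cos (π / (2 : ℝ) ^ m) < Real.cos (π / (2 : ℝ) ^ (m + 1)))
    (p q : Fin 2 → ℝ) (hp : p ∈ Vset m ε) (hq : q ∈ Vset m ε) (hpq : p ≠ q) :
    (2⁻¹ : ℝ) • (p + q) ∈ interior (P m) := by
  obtain ⟨i, hi, rfl⟩ := hp
  obtain ⟨j, hj, rfl⟩ := hq
  have hij : i ≠ j := by rintro rfl; exact hpq rfl
  set θ : ℝ := π / (2:ℝ)^(m+1) with hθ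
  have hθpos : 0 < θ := by positivity
  have hθlt : θ < π / 2 := by
    rw [hθ, div_lt_div_iff₀ (by positivity) (by norm_num)]
    have h4 : (4:ℝ) ≤ (2:ℝ)^(m+1) := by
      calc (4:ℝ) = 2^2 := by norm_num
        _ ≤ (2:ℝ)^(m+1) := by apply pow_le_pow_right₀ (by norm_num); omega
    nlinarith [Real.pi_pos]
  have hcosθpos : 0 < Real.cos θ := Real.cos_pos_of_mem_Ioo ⟨by linarith, hθlt⟩
  -- key strict inequality for each edge
  have key : ∀ k < 2^(m+1),
      ((2⁻¹:ℝ) • ((1+ε) • vertex m i + (1+ε) • vertex m j)) 0 * polyNormal m k 0 +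
      ((2⁻¹:ℝ) • ((1+ε) • vertex m i + (1+ε) • vertex m j)) 1 * polyNormal m k 1
      < Real.cos θ := by
    intro k hk
    have hA : ∀ l : ℕ, (π / 2 + 2 * π * (l:ℝ) / (2:ℝ)^m) -
        (π / 2 + (2 * (k:ℝ) + 1) * π / (2:ℝ)^(m+1)) = ((4*(l:ℤ) - 2*k - 1 : ℤ):ℝ) * θ := by
      intro l
      have h2 : (2:ℝ)^(m+1) = 2 * 2^m := by ring
      rw [hθ]
      push_cast
      field_simp
      ring
    have hval : ((2⁻¹:ℝ) • ((1+ε) • vertex m i + (1+ε) • vertex m j)) 0 * polyNormal m k 0 +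
        ((2⁻¹:ℝ) • ((1+ε) • vertex m i + (1+ε) • vertex m j)) 1 * polyNormal m k 1
        = (1+ε)/2 * (Real.cos (((4*(i:ℤ) - 2*k - 1 : ℤ):ℝ) * θ) +
            Real.cos (((4*(j:ℤ) - 2*k - 1 : ℤ):ℝ) * θ)) := by
      rw [← hA i, ← hA j, Real.cos_sub, Real.cos_sub]
      simp [vertex, polyNormal, Pi.smul_apply, smul_eq_mul]
      ring
    rw [hval]
    -- bound the two cosines
    have hoddi : Odd (4*(i:ℤ) - 2*k - 1) := ⟨2*i - k - 1, by ring⟩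
    have hoddj : Odd (4*(j:ℤ) - 2*k - 1) := ⟨2*j - k - 1, by ring⟩
    have hsum : Real.cos (((4*(i:ℤ) - 2*k - 1 : ℤ):ℝ) * θ) +
        Real.cos (((4*(j:ℤ) - 2*k - 1 : ℤ):ℝ) * θ) ≤ Real.cos θ + Real.cos (3 * θ) := by
      by_cases hcase : (2:ℤ)^(m+2) ∣ (4*(i:ℤ) - 2*k - 1) - 1 ∨ (2:ℤ)^(m+2) ∣ (4*(i:ℤ) - 2*k - 1) + 1
      · have hnj : ¬ ((2:ℤ)^(m+2) ∣ (4*(j:ℤ) - 2*k - 1) - 1 ∨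
            (2:ℤ)^(m+2) ∣ (4*(j:ℤ) - 2*k - 1) + 1) := fun h => not_both m i j k hi hj hij hcase h
        push_neg at hnj
        have b1 := cos_odd_le m _ hoddi
        have b2 := cos_odd_le3 m _ hoddj hnj.1 hnj.2
        rw [← hθ] at b1 b2
        linarith
      · push_neg at hcase
        have b1 := cos_odd_le3 m _ hoddi hcase.1 hcase.2
        have b2 := cos_odd_le m _ hoddj
        rw [← hθ] at b1 b2
        linarith
    have hident : Real.cos θ + Real.cos (3 * θ) = 2 * Real.cos (2 * θ) * Real.cos θ := by
      have h1 := Real.cos_add (2*θ) θ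
      have h2 := Real.cos_sub (2*θ) θ
      have e1 : 2*θ + θ = 3*θ := by ring
      have e2 : 2*θ - θ = θ := by ring
      rw [e1] at h1; rw [e2] at h2
      linarith
    have h2θ : 2 * θ = π / (2:ℝ)^m := by
      rw [hθ]; field_simp; ring
    have hε2' : (1 + ε) * Real.cos (2*θ) < Real.cos θ := by rw [h2θ]; exact hε2
    have hcos1 : Real.cos θ ≤ 1 := Real.cos_le_one θ
    calc (1+ε)/2 * (Real.cos (((4*(i:ℤ) - 2*k - 1 : ℤ):ℝ) * θ) +
            Real.cos (((4*(j:ℤ) - 2*k - 1 : ℤ):ℝ) * θ))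
        ≤ (1+ε)/2 * (Real.cos θ + Real.cos (3 * θ)) := by
          apply mul_le_mul_of_nonneg_left hsum (by linarith)
      _ = (1+ε) * Real.cos (2*θ) * Real.cos θ := by rw [hident]; ring
      _ < Real.cos θ * Real.cos θ := by
          apply mul_lt_mul_of_pos_right hε2' hcosθpos
      _ ≤ 1 * Real.cos θ := by nlinarith
      _ = Real.cos θ := one_mul _
  -- interior argument
  set S : Set (Fin 2 → ℝ) := {x | ∀ k < 2^(m+1),
      x 0 * polyNormal m k 0 + x 1 * polyNormal m k 1 < Real.cos (π / (2:ℝ)^(m+1))} with hS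
  have hopen : IsOpen S := by
    have hSeq : S = ⋂ k ∈ Finset.range (2^(m+1)), {x : Fin 2 → ℝ |
        x 0 * polyNormal m k 0 + x 1 * polyNormal m k 1 < Real.cos (π / (2:ℝ)^(m+1))} := by
      ext x; simp [hS]
    rw [hSeq]
    exact isOpen_biInter_finset fun k _ => isOpen_lt
      (((continuous_apply 0).mul continuous_const).add
        ((continuous_apply 1).mul continuous_const)) continuous_const
  have hsub : S ⊆ P m := fun x hx k hk => le_of_lt (hx k hk)
  exact interior_maximal hsub hopen (key)
end

section
/- Let m ≥ 1, let ε > 0 satisfy (1+ε)·cos(π/2^m) < cos(π/2^(m+1)), let C ⊆ ℝ² be a convex set, and let F : ℝ² → ℝ agree with an affine map on C. If F correctly classifies f_m, then C contains at most one point of V_ε. -/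
open Real

/-- `F` correctly classifies `f_m`: positive on the interior of `P m`,
nonpositive outside `P m`. -/
def CorrectlyClassifies (m : ℕ) (F : (Fin 2 → ℝ) → ℝ) : Prop :=
  (∀ x ∈ interior (P m), 0 < F x) ∧ ∀ x ∉ P m, F x ≤ 0

lemma cos_half_pos (m : ℕ) (hm : 1 ≤ m) : 0 < Real.cos (π / (2 : ℝ) ^ (m + 1)) := by
  apply Real.cos_pos_of_mem_Ioo
  constructor
  · have : (0:ℝ) < π / (2:ℝ)^(m+1) := by positivity
    linarith [Real.pi_pos]
  · have h2 : (2:ℝ) < (2:ℝ)^(m+1) := by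
      have : (2:ℝ)^1 < (2:ℝ)^(m+1) := by
        exact pow_lt_pow_right₀ (by norm_num) (by omega)
      simpa using this
    exact div_lt_div_of_pos_left Real.pi_pos (by norm_num) h2

lemma pushed_not_mem (m : ℕ) (hm : 1 ≤ m) (ε : ℝ) (hε : 0 < ε) (j : ℕ) (hj : j < 2 ^ m) :
    (1 + ε) • vertex m j ∉ P m := by
  intro h
  have hk : 2 * j < 2 ^ (m + 1) := by
    have := pow_succ 2 m; omega
  have hle := h (2 * j) hk
  set θ : ℝ := π / 2 + 2 * π * (j : ℝ) / (2 : ℝ) ^ m with hθ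
  set φ : ℝ := π / 2 + (2 * ((2 * j : ℕ) : ℝ) + 1) * π / (2 : ℝ) ^ (m + 1) with hφ
  have hval : ((1 + ε) • vertex m j) 0 * polyNormal m (2 * j) 0
      + ((1 + ε) • vertex m j) 1 * polyNormal m (2 * j) 1
      = (1 + ε) * Real.cos (θ - φ) := by
    simp only [vertex, polyNormal, Pi.smul_apply, Matrix.cons_val_zero, Matrix.cons_val_one,
      Matrix.head_cons, smul_eq_mul, Real.cos_sub]
    ring
  have hθφ : θ - φ = -(π / (2 : ℝ) ^ (m + 1)) := by
    have hne : ((2:ℝ)^m) ≠ 0 := by positivity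
    rw [hθ, hφ]
    have h2 : ((2:ℝ) ^ (m+1)) = 2 * 2 ^ m := by ring
    rw [h2]
    push_cast
    field_simp
    ring
  rw [hval, hθφ, Real.cos_neg] at hle
  have hc := cos_half_pos m hm
  nlinarith

set_option maxHeartbeats 1000000 in
lemma mid_mem_interior (m : ℕ) (hm : 1 ≤ m) (ε : ℝ) (hε : 0 < ε)
    (hε2 : (1 + ε) * Real.cos (π / (2 : ℝ) ^ m) < Real.cos (π / (2 : ℝ) ^ (m + 1)))
    (j j' : ℕ) (hj : j < 2 ^ m) (hj' : j' < 2 ^ m) (hjj : j ≠ j') :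
    (1/2 : ℝ) • ((1 + ε) • vertex m j) + (1/2 : ℝ) • ((1 + ε) • vertex m j')
      ∈ interior (P m) := by
  set S : Set (Fin 2 → ℝ) := {x | ∀ k ∈ Finset.range (2 ^ (m + 1)),
      x 0 * polyNormal m k 0 + x 1 * polyNormal m k 1 < Real.cos (π / (2 : ℝ) ^ (m + 1))}
    with hS
  have hopen : IsOpen S := by
    have hSeq : S = ⋂ k ∈ Finset.range (2 ^ (m + 1)),
        {x : Fin 2 → ℝ | x 0 * polyNormal m k 0 + x 1 * polyNormal m k 1
          < Real.cos (π / (2 : ℝ) ^ (m + 1))} := by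
      ext x; simp [hS]
    rw [hSeq]
    exact isOpen_biInter_finset fun k _ => isOpen_lt (by fun_prop) continuous_const
  have hsubP : S ⊆ P m := fun x hx k hk => (hx k (Finset.mem_range.2 hk)).le
  apply interior_maximal hsubP hopen
  -- now show the strict inequalities
  intro k _
  set θ : ℝ := π / 2 + 2 * π * (j : ℝ) / (2 : ℝ) ^ m with hθ
  set θ' : ℝ := π / 2 + 2 * π * ((j' : ℝ)) / (2 : ℝ) ^ m with hθ'
  set φ : ℝ := π / 2 + (2 * (k : ℝ) + 1) * π / (2 : ℝ) ^ (m + 1) with hφ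
  set x := (1/2 : ℝ) • ((1 + ε) • vertex m j) + (1/2 : ℝ) • ((1 + ε) • vertex m j') with hx
  have hval : x 0 * polyNormal m k 0 + x 1 * polyNormal m k 1
      = (1 + ε) / 2 * (Real.cos (θ - φ) + Real.cos (θ' - φ)) := by
    simp only [hx, vertex, polyNormal, Pi.add_apply, Pi.smul_apply, Matrix.cons_val_zero,
      Matrix.cons_val_one, Matrix.head_cons, smul_eq_mul, Real.cos_sub]
    ring
  rw [hval, Real.cos_add_cos]
  set A : ℝ := ((θ - φ) + (θ' - φ)) / 2 with hA
  have hB : ((θ - φ) - (θ' - φ)) / 2 = π * ((j : ℝ) - (j' : ℝ)) / (2 : ℝ) ^ m := by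
    rw [hθ, hθ']
    have hne : ((2:ℝ)^m) ≠ 0 := by positivity
    field_simp
    ring
  rw [hB]
  set d : ℝ := (j : ℝ) - (j' : ℝ) with hd
  set c : ℝ := Real.cos (π / (2 : ℝ) ^ m) with hc
  -- bounds on |d|
  have hpm2 : (2:ℝ) ≤ (2:ℝ) ^ m := by
    calc (2:ℝ) = 2^1 := (pow_one 2).symm
    _ ≤ 2^m := pow_le_pow_right₀ (by norm_num) hm
  have hpmpos : (0:ℝ) < (2:ℝ) ^ m := by positivity
  have hd1 : (1:ℝ) ≤ |d| := by
    have hne : (j:ℤ) - (j':ℤ) ≠ 0 := by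
      simp only [sub_ne_zero]; exact_mod_cast hjj
    have := Int.one_le_abs hne
    rw [hd]
    exact_mod_cast this
  have hd2 : |d| ≤ (2:ℝ)^m - 1 := by
    have h1 : ((j:ℝ)) + 1 ≤ (2:ℝ)^m := by exact_mod_cast Nat.succ_le_of_lt hj
    have h2 : ((j':ℝ)) + 1 ≤ (2:ℝ)^m := by exact_mod_cast Nat.succ_le_of_lt hj'
    have h3 : (0:ℝ) ≤ (j:ℝ) := Nat.cast_nonneg j
    have h4 : (0:ℝ) ≤ (j':ℝ) := Nat.cast_nonneg j'
    rw [hd, abs_le]; constructor <;> linarith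
  -- bounds on cos of the half-difference
  have hπpos := Real.pi_pos
  have hxabs : |π * d / (2:ℝ)^m| = π * |d| / (2:ℝ)^m := by
    rw [abs_div, abs_mul, abs_of_pos hπpos, abs_of_pos hpmpos]
  have hx1 : π / (2:ℝ)^m ≤ π * |d| / (2:ℝ)^m := by
    have : π ≤ π * |d| := by nlinarith
    exact div_le_div_of_nonneg_right this hpmpos.le
  have hx2 : π * |d| / (2:ℝ)^m ≤ π - π / (2:ℝ)^m := by
    rw [div_le_iff₀ hpmpos]
    have : π * |d| ≤ π * ((2:ℝ)^m - 1) := by nlinarith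
    calc π * |d| ≤ π * ((2:ℝ)^m - 1) := this
    _ = (π - π / (2:ℝ)^m) * (2:ℝ)^m := by field_simp
  have hxπ : π * |d| / (2:ℝ)^m ≤ π := by
    have : (0:ℝ) < π / (2:ℝ)^m := by positivity
    linarith
  have hx0 : (0:ℝ) ≤ π / (2:ℝ)^m := by positivity
  have hcosB : |Real.cos (π * d / (2:ℝ)^m)| ≤ c := by
    rw [← Real.cos_abs, hxabs, abs_le]
    constructor
    · have h5 : Real.cos (π - π * |d| / (2:ℝ)^m) ≤ c := by
        apply Real.cos_le_cos_of_nonneg_of_le_pi hx0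
        · linarith
        · linarith
      rw [Real.cos_pi_sub] at h5
      linarith
    · exact Real.cos_le_cos_of_nonneg_of_le_pi hx0 hxπ hx1
  have hcnonneg : 0 ≤ c := by
    rw [hc]
    apply Real.cos_nonneg_of_mem_Icc
    constructor
    · have : (0:ℝ) < π / (2:ℝ)^m := by positivity
      linarith
    · rw [div_le_div_iff₀ hpmpos (by norm_num : (0:ℝ) < 2)]
      nlinarith
  have hkey : Real.cos A * Real.cos (π * d / (2:ℝ)^m) ≤ c := by
    calc Real.cos A * Real.cos (π * d / (2:ℝ)^m)
        ≤ |Real.cos A * Real.cos (π * d / (2:ℝ)^m)| := le_abs_self _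
    _ = |Real.cos A| * |Real.cos (π * d / (2:ℝ)^m)| := abs_mul _ _
    _ ≤ 1 * c := mul_le_mul (Real.abs_cos_le_one A) hcosB (abs_nonneg _) zero_le_one
    _ = c := one_mul c
  nlinarith [hkey, hε2]

/-- A convex region on which a correct classifier is affine contains
at most one point of `V_ε`. -/
theorem convex_piece_contains_at_most_one_pushed_vertex (m : ℕ) (hm : 1 ≤ m)
    (ε : ℝ) (hε : 0 < ε)
    (hε2 : (1 + ε) * Real.cos (π / (2 : ℝ) ^ m) < Real.cos (π / (2 : ℝ) ^ (m + 1)))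
    (C : Set (Fin 2 → ℝ)) (hC : Convex ℝ C)
    (F : (Fin 2 → ℝ) → ℝ) (g : (Fin 2 → ℝ) →ᵃ[ℝ] ℝ) (hFg : ∀ x ∈ C, F x = g x)
    (hcls : CorrectlyClassifies m F) :
    ∀ p ∈ Vset m ε ∩ C, ∀ q ∈ Vset m ε ∩ C, p = q := by
  rintro p ⟨⟨j, hj, rfl⟩, hpC⟩ q ⟨⟨j', hj', rfl⟩, hqC⟩
  by_contra hne
  have hjj : j ≠ j' := by rintro rfl; exact hne rfl
  set p := (1 + ε) • vertex m j with hp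
  set q := (1 + ε) • vertex m j' with hq
  set x := (1/2 : ℝ) • p + (1/2 : ℝ) • q with hxdef
  have hxC : x ∈ C := hC hpC hqC (by norm_num) (by norm_num) (by norm_num)
  have hxint : x ∈ interior (P m) := mid_mem_interior m hm ε hε hε2 j j' hj hj' hjj
  have hFp : F p ≤ 0 := hcls.2 p (pushed_not_mem m hm ε hε j hj)
  have hFq : F q ≤ 0 := hcls.2 q (pushed_not_mem m hm ε hε j' hj')
  have hgx : g x = (1/2 : ℝ) * g p + (1/2 : ℝ) * g q := by
    rw [hxdef, Convex.combo_affine_apply (by norm_num : (1/2 : ℝ) + 1/2 = 1)]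
    simp [smul_eq_mul]
  have hFx : F x = (1/2 : ℝ) * F p + (1/2 : ℝ) * F q := by
    rw [hFg x hxC, hgx, ← hFg p hpC, ← hFg q hqC]
  have hpos : 0 < F x := hcls.1 x hxint
  linarith
end
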